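/- (Lipschitzness of the MAML meta-gradient.) Let (ι, 𝒜, P) be a probability space of tasks and let l : ι → (ℝ^d → ℝ) be a family of twice continuously differentiable functions such that, for every i ∈ ι, ∇l_i is L-Lipschitz (L > 0) and ∇²l_i is ρ-Lipschitz (in operator norm). Let α ≥ 0 and N ≥ 1. For each i and w ∈ ℝ^d let w̃_0^i(w) = w, w̃_{j+1}^i(w) = w̃_j^i(w) − α∇l_i(w̃_j^i(w)), and ∇L_i(w) := (I − α∇²l_i(w̃_0^i(w)))⋯(I − α∇²l_i(w̃_{N−1}^i(w)))∇l_i(w̃_N^i(w)) (product with the j = 0 factor leftmost). Assume that for every w the map i ↦ ∇L_i(w) is Bochner P-integrable and i ↦ ‖∇l_i(w)‖ is P-integrable, and set ∇𝓛(w) := ∫ ∇L_i(w) dP(i). Then for all w, u ∈ ℝ^d, ‖∇𝓛(w) − ∇𝓛(u)‖ ≤ ( (1+αL)^{2N} L + C_𝓛 · ∫ ‖∇l_i(w)‖ dP(i) )·‖w − u‖, where C_𝓛 = ( (1+αL)^{N−1}·αρ + (ρ/L)·(1+αL)^N·((1+αL)^{N−1} − 1) )·(1+αL)^N. -/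

import Mathlib

open MeasureTheory

noncomputable section

section Aux

variable {E : Type*} [NormedAddCommGroup E] [NormedSpace ℝ E]

lemma aux_prod_norm (f : ℕ → E →L[ℝ] E) (M : ℝ) (hf : ∀ j, ‖f j‖ ≤ M) :
    ∀ n, ‖((List.range n).map f).prod‖ ≤ M ^ n := by
  intro n
  have hM : 0 ≤ M := (norm_nonneg (f 0)).trans (hf 0)
  induction n with
  | zero =>
    simpa [ContinuousLinearMap.one_def] using (ContinuousLinearMap.norm_id_le (E := E))
  | succ n ih =>
    rw [List.range_succ, List.map_append, List.prod_append]
    simp only [List.map_cons, List.map_nil, List.prod_cons, List.prod_nil, mul_one]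
    calc ‖((List.range n).map f).prod * f n‖
        ≤ ‖((List.range n).map f).prod‖ * ‖f n‖ := norm_mul_le _ _
      _ ≤ M ^ n * M := mul_le_mul ih (hf n) (norm_nonneg _) (pow_nonneg hM n)
      _ = M ^ (n + 1) := (pow_succ M n).symm

lemma aux_prod_diff (f g : ℕ → E →L[ℝ] E) (M : ℝ) (hf : ∀ j, ‖f j‖ ≤ M)
    (hg : ∀ j, ‖g j‖ ≤ M) :
    ∀ n, ‖((List.range (n + 1)).map f).prod - ((List.range (n + 1)).map g).prod‖
      ≤ ∑ j ∈ Finset.range (n + 1), M ^ n * ‖f j - g j‖ := by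
  intro n
  have hM : 0 ≤ M := (norm_nonneg (f 0)).trans (hf 0)
  induction n with
  | zero => simp [List.range_succ]
  | succ n ih =>
    rw [show n + 1 + 1 = (n+1) + 1 from rfl, List.range_succ (n := n+1)]
    rw [List.map_append, List.prod_append, List.map_append (f := g), List.prod_append]
    simp only [List.map_cons, List.map_nil, List.prod_cons, List.prod_nil, mul_one]
    set Pf := ((List.range (n + 1)).map f).prod with hPf
    set Pg := ((List.range (n + 1)).map g).prod with hPg
    have key : Pf * f (n + 1) - Pg * g (n + 1)
        = (Pf - Pg) * f (n + 1) + Pg * (f (n + 1) - g (n + 1)) := by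
      rw [sub_mul, mul_sub]; abel
    have h1 : ‖(Pf - Pg) * f (n + 1)‖ ≤ ‖Pf - Pg‖ * M :=
      (norm_mul_le _ _).trans (mul_le_mul_of_nonneg_left (hf _) (norm_nonneg _))
    have h2 : ‖Pg * (f (n + 1) - g (n + 1))‖ ≤ M ^ (n + 1) * ‖f (n + 1) - g (n + 1)‖ :=
      (norm_mul_le _ _).trans
        (mul_le_mul_of_nonneg_right (aux_prod_norm g M hg (n + 1)) (norm_nonneg _))
    have h3 : ‖Pf - Pg‖ * M ≤ (∑ j ∈ Finset.range (n + 1), M ^ n * ‖f j - g j‖) * M :=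
      mul_le_mul_of_nonneg_right ih hM
    have h4 : (∑ j ∈ Finset.range (n + 1), M ^ n * ‖f j - g j‖) * M
        + M ^ (n + 1) * ‖f (n + 1) - g (n + 1)‖
        = ∑ j ∈ Finset.range (n + 2), M ^ (n + 1) * ‖f j - g j‖ := by
      conv_rhs => rw [show n + 2 = (n + 1) + 1 from rfl, Finset.sum_range_succ]
      congr 1
      rw [Finset.sum_mul]
      exact Finset.sum_congr rfl fun j _ => by ring
    calc ‖Pf * f (n + 1) - Pg * g (n + 1)‖
        ≤ ‖(Pf - Pg) * f (n + 1)‖ + ‖Pg * (f (n + 1) - g (n + 1))‖ := by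
          rw [key]; exact norm_add_le _ _
      _ ≤ ‖Pf - Pg‖ * M + M ^ (n + 1) * ‖f (n + 1) - g (n + 1)‖ := add_le_add h1 h2
      _ ≤ (∑ j ∈ Finset.range (n + 1), M ^ n * ‖f j - g j‖) * M
            + M ^ (n + 1) * ‖f (n + 1) - g (n + 1)‖ := add_le_add_left h3 _
      _ = ∑ j ∈ Finset.range (n + 2), M ^ (n + 1) * ‖f j - g j‖ := h4

end Aux

section Aux2

variable {E : Type*} [NormedAddCommGroup E] [NormedSpace ℝ E]

lemma aux_path (g : E → E) (Lc a : ℝ) (ha : 0 ≤ a) (hLc : 0 ≤ Lc)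
    (hLip : ∀ x y, ‖g x - g y‖ ≤ Lc * ‖x - y‖)
    (p q : ℕ → E) (hpS : ∀ j, p (j + 1) = p j - a • g (p j))
    (hqS : ∀ j, q (j + 1) = q j - a • g (q j)) :
    ∀ j, ‖p j - q j‖ ≤ (1 + a * Lc) ^ j * ‖p 0 - q 0‖ := by
  intro j
  induction j with
  | zero => simp
  | succ j ih =>
    have hB : (0:ℝ) ≤ 1 + a * Lc := by positivity
    have key : p (j + 1) - q (j + 1) = (p j - q j) - a • (g (p j) - g (q j)) := by
      rw [hpS, hqS, smul_sub]; abel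
    calc ‖p (j + 1) - q (j + 1)‖
        ≤ ‖p j - q j‖ + ‖a • (g (p j) - g (q j))‖ := by
          rw [key]; exact norm_sub_le _ _
      _ = ‖p j - q j‖ + a * ‖g (p j) - g (q j)‖ := by
          rw [norm_smul, Real.norm_of_nonneg ha]
      _ ≤ ‖p j - q j‖ + a * (Lc * ‖p j - q j‖) :=
          add_le_add_right (mul_le_mul_of_nonneg_left (hLip _ _) ha) _
      _ = (1 + a * Lc) * ‖p j - q j‖ := by ring
      _ ≤ (1 + a * Lc) * ((1 + a * Lc) ^ j * ‖p 0 - q 0‖) :=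
          mul_le_mul_of_nonneg_left ih hB
      _ = (1 + a * Lc) ^ (j + 1) * ‖p 0 - q 0‖ := by ring

lemma aux_grow (g : E → E) (Lc a : ℝ) (ha : 0 ≤ a) (hLc : 0 ≤ Lc)
    (hLip : ∀ x y, ‖g x - g y‖ ≤ Lc * ‖x - y‖)
    (p : ℕ → E) (hpS : ∀ j, p (j + 1) = p j - a • g (p j)) :
    ∀ j, ‖g (p j)‖ ≤ (1 + a * Lc) ^ j * ‖g (p 0)‖ := by
  intro j
  induction j with
  | zero => simp
  | succ j ih =>
    have hB : (0:ℝ) ≤ 1 + a * Lc := by positivity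
    have hstep : p (j + 1) - p j = -(a • g (p j)) := by rw [hpS]; abel
    calc ‖g (p (j + 1))‖
        = ‖g (p j) + (g (p (j + 1)) - g (p j))‖ := by
          congr 1; abel
      _ ≤ ‖g (p j)‖ + ‖g (p (j + 1)) - g (p j)‖ := norm_add_le _ _
      _ ≤ ‖g (p j)‖ + Lc * ‖p (j + 1) - p j‖ := add_le_add_right (hLip _ _) _
      _ = ‖g (p j)‖ + Lc * (a * ‖g (p j)‖) := by
          rw [hstep, norm_neg, norm_smul, Real.norm_of_nonneg ha]
      _ = (1 + a * Lc) * ‖g (p j)‖ := by ring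
      _ ≤ (1 + a * Lc) * ((1 + a * Lc) ^ j * ‖g (p 0)‖) :=
          mul_le_mul_of_nonneg_left ih hB
      _ = (1 + a * Lc) ^ (j + 1) * ‖g (p 0)‖ := by ring

end Aux2

set_option maxHeartbeats 1000000 in
/-- Proposition 6.1: Lipschitzness of the multi-step MAML
meta-gradient in the resampling case.  Tasks are drawn from a probability measure
`P`; for each task `i`, `∇L_i(w)` is the meta gradient obtained by the chain rule
through the `N`-step inner gradient-descent path, and `∇𝓛(w) = ∫ ∇L_i(w) dP(i)`. -/
theorem maml_meta_gradient_lipschitz (d : ℕ) {ι : Type*} [MeasurableSpace ι]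
    (P : Measure ι) [IsProbabilityMeasure P]
    (l : ι → EuclideanSpace ℝ (Fin d) → ℝ) (L ρ α : ℝ) (N : ℕ)
    (hL : 0 < L) (hρ : 0 ≤ ρ) (hα : 0 ≤ α) (hN : 1 ≤ N)
    (hC2 : ∀ i, ContDiff ℝ 2 (l i))
    (hLip : ∀ i w u, ‖gradient (l i) w - gradient (l i) u‖ ≤ L * ‖w - u‖)
    (hHess : ∀ i w u,
      ‖fderiv ℝ (gradient (l i)) w - fderiv ℝ (gradient (l i)) u‖ ≤ ρ * ‖w - u‖)
    (wp : ι → EuclideanSpace ℝ (Fin d) → ℕ → EuclideanSpace ℝ (Fin d))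
    (hwp0 : ∀ i w, wp i w 0 = w)
    (hwpS : ∀ i w j, wp i w (j + 1) = wp i w j - α • gradient (l i) (wp i w j))
    (gradL : ι → EuclideanSpace ℝ (Fin d) → EuclideanSpace ℝ (Fin d))
    (hgradL : ∀ i w, gradL i w =
      (((List.range N).map (fun j =>
          (1 : EuclideanSpace ℝ (Fin d) →L[ℝ] EuclideanSpace ℝ (Fin d))
            - α • fderiv ℝ (gradient (l i)) (wp i w j))).prod)
        (gradient (l i) (wp i w N)))
    (hInt : ∀ w, Integrable (fun i => gradL i w) P)
    (hIntn : ∀ w, Integrable (fun i => ‖gradient (l i) w‖) P)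
    (C : ℝ)
    (hC : C = ((1 + α * L) ^ (N - 1) * (α * ρ)
      + (ρ / L) * (1 + α * L) ^ N * ((1 + α * L) ^ (N - 1) - 1)) * (1 + α * L) ^ N) :
    ∀ w u : EuclideanSpace ℝ (Fin d),
      ‖(∫ i, gradL i w ∂P) - ∫ i, gradL i u ∂P‖
        ≤ ((1 + α * L) ^ (2 * N) * L + C * ∫ i, ‖gradient (l i) w‖ ∂P) * ‖w - u‖ := by
  obtain ⟨n, rfl⟩ : ∃ n, N = n + 1 := ⟨N - 1, (Nat.succ_pred_eq_of_pos hN).symm⟩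
  intro w u
  have hM1 : (1:ℝ) ≤ 1 + α * L := by nlinarith
  have hM0 : (0:ℝ) ≤ 1 + α * L := by linarith
  set M : ℝ := 1 + α * L with hMdef
  -- rewrite the constant C
  have hCeq : C = M ^ n * (α * ρ) * (∑ j ∈ Finset.range (n + 1), M ^ j) * M ^ (n + 1) := by
    have hg : (∑ j ∈ Finset.range n, M ^ j) * (M - 1) = M ^ n - 1 := geom_sum_mul M n
    rw [hC]
    simp only [Nat.add_sub_cancel]
    rw [geom_sum_succ]
    rw [hMdef] at hg ⊢
    have hXn : (1 + α * L) ^ n - 1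
        = (∑ j ∈ Finset.range n, (1 + α * L) ^ j) * (α * L) := by
      linear_combination - hg
    rw [hXn]
    field_simp
    ring
  -- operator norm of the Hessian
  have hHnorm : ∀ i x, ‖fderiv ℝ (gradient (l i)) x‖ ≤ L := by
    intro i x
    have hlip : LipschitzWith (Real.toNNReal L) (gradient (l i)) := by
      apply LipschitzWith.of_dist_le_mul
      intro x y
      rw [dist_eq_norm, dist_eq_norm, Real.coe_toNNReal L hL.le]
      exact hLip i x y
    have h := norm_fderiv_le_of_lipschitz ℝ hlip (x₀ := x)
    rwa [Real.coe_toNNReal L hL.le] at h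
  -- pointwise bound
  have hpoint : ∀ i, ‖gradL i w - gradL i u‖
      ≤ (M ^ (2 * (n + 1)) * L + C * ‖gradient (l i) w‖) * ‖w - u‖ := by
    intro i
    set g := gradient (l i) with hgdef
    set H := fun x => fderiv ℝ g x with hHdef
    set F : ℕ → (EuclideanSpace ℝ (Fin d) →L[ℝ] EuclideanSpace ℝ (Fin d)) :=
      fun j => 1 - α • H (wp i w j) with hFdef
    set G : ℕ → (EuclideanSpace ℝ (Fin d) →L[ℝ] EuclideanSpace ℝ (Fin d)) :=
      fun j => 1 - α • H (wp i u j) with hGdef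
    have hlip' : ∀ x y, ‖g x - g y‖ ≤ L * ‖x - y‖ := hLip i
    have hpath : ∀ j, ‖wp i w j - wp i u j‖ ≤ M ^ j * ‖w - u‖ := by
      intro j
      have := aux_path g L α hα hL.le hlip' (wp i w) (wp i u)
        (hwpS i w) (hwpS i u) j
      rwa [hwp0, hwp0] at this
    have hgrow : ∀ j, ‖g (wp i w j)‖ ≤ M ^ j * ‖g w‖ := by
      intro j
      have := aux_grow g L α hα hL.le hlip' (wp i w) (hwpS i w) j
      rwa [hwp0] at this
    have hFn : ∀ j, ‖F j‖ ≤ M := by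
      intro j
      calc ‖F j‖ ≤ ‖(1 : EuclideanSpace ℝ (Fin d) →L[ℝ] EuclideanSpace ℝ (Fin d))‖
            + ‖α • H (wp i w j)‖ := norm_sub_le _ _
        _ ≤ 1 + α * L := by
            have h1 : ‖(1 : EuclideanSpace ℝ (Fin d) →L[ℝ] EuclideanSpace ℝ (Fin d))‖ ≤ 1 := by
              rw [ContinuousLinearMap.one_def]
              exact ContinuousLinearMap.norm_id_le
            have h2 : ‖α • H (wp i w j)‖ ≤ α * L := by
              have h := norm_smul_le α (H (wp i w j))
              rw [Real.norm_of_nonneg hα] at h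
              exact h.trans (mul_le_mul_of_nonneg_left (hHnorm i _) hα)
            linarith
    have hGn : ∀ j, ‖G j‖ ≤ M := by
      intro j
      calc ‖G j‖ ≤ ‖(1 : EuclideanSpace ℝ (Fin d) →L[ℝ] EuclideanSpace ℝ (Fin d))‖
            + ‖α • H (wp i u j)‖ := norm_sub_le _ _
        _ ≤ 1 + α * L := by
            have h1 : ‖(1 : EuclideanSpace ℝ (Fin d) →L[ℝ] EuclideanSpace ℝ (Fin d))‖ ≤ 1 := by
              rw [ContinuousLinearMap.one_def]
              exact ContinuousLinearMap.norm_id_le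
            have h2 : ‖α • H (wp i u j)‖ ≤ α * L := by
              have h := norm_smul_le α (H (wp i u j))
              rw [Real.norm_of_nonneg hα] at h
              exact h.trans (mul_le_mul_of_nonneg_left (hHnorm i _) hα)
            linarith
    have hFG : ∀ j, ‖F j - G j‖ ≤ α * ρ * (M ^ j * ‖w - u‖) := by
      intro j
      have hkey : F j - G j = α • (H (wp i u j) - H (wp i w j)) := by
        rw [hFdef, hGdef]; simp only [smul_sub]; abel
      calc ‖F j - G j‖ ≤ α * ‖H (wp i u j) - H (wp i w j)‖ := by
            rw [hkey]
            have h := norm_smul_le α (H (wp i u j) - H (wp i w j))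
            rwa [Real.norm_of_nonneg hα] at h
        _ ≤ α * (ρ * ‖wp i u j - wp i w j‖) :=
            mul_le_mul_of_nonneg_left (hHess i _ _) hα
        _ = α * (ρ * ‖wp i w j - wp i u j‖) := by rw [norm_sub_rev]
        _ ≤ α * (ρ * (M ^ j * ‖w - u‖)) := by
            have := hpath j
            have h0 : 0 ≤ α * ρ := mul_nonneg hα hρ
            nlinarith [this, mul_nonneg hα hρ]
        _ = α * ρ * (M ^ j * ‖w - u‖) := by ring
    set Pw := ((List.range (n + 1)).map F).prod with hPw
    set Pu := ((List.range (n + 1)).map G).prod with hPu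
    have hsplit : gradL i w - gradL i u
        = (Pw - Pu) (g (wp i w (n + 1))) + Pu (g (wp i w (n + 1)) - g (wp i u (n + 1))) := by
      rw [hgradL i w, hgradL i u]
      simp only [ContinuousLinearMap.sub_apply, map_sub]
      abel
    have hPdiff : ‖Pw - Pu‖ ≤ M ^ n * (α * ρ) * (∑ j ∈ Finset.range (n + 1), M ^ j) * ‖w - u‖ := by
      calc ‖Pw - Pu‖ ≤ ∑ j ∈ Finset.range (n + 1), M ^ n * ‖F j - G j‖ :=
            aux_prod_diff F G M hFn hGn n
        _ ≤ ∑ j ∈ Finset.range (n + 1), M ^ n * (α * ρ * (M ^ j * ‖w - u‖)) := by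
            apply Finset.sum_le_sum
            intro j _
            exact mul_le_mul_of_nonneg_left (hFG j) (pow_nonneg hM0 n)
        _ = M ^ n * (α * ρ) * (∑ j ∈ Finset.range (n + 1), M ^ j) * ‖w - u‖ := by
            rw [Finset.mul_sum, Finset.sum_mul]
            exact Finset.sum_congr rfl fun j _ => by ring
    have hPun : ‖Pu‖ ≤ M ^ (n + 1) := aux_prod_norm G M hGn (n + 1)
    have hgN : ‖g (wp i w (n + 1))‖ ≤ M ^ (n + 1) * ‖g w‖ := hgrow (n + 1)
    have hgdiff : ‖g (wp i w (n + 1)) - g (wp i u (n + 1))‖ ≤ L * (M ^ (n + 1) * ‖w - u‖) := by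
      calc ‖g (wp i w (n + 1)) - g (wp i u (n + 1))‖
          ≤ L * ‖wp i w (n + 1) - wp i u (n + 1)‖ := hlip' _ _
        _ ≤ L * (M ^ (n + 1) * ‖w - u‖) :=
            mul_le_mul_of_nonneg_left (hpath (n + 1)) hL.le
    have t1 : ‖(Pw - Pu) (g (wp i w (n + 1)))‖
        ≤ (M ^ n * (α * ρ) * (∑ j ∈ Finset.range (n + 1), M ^ j) * ‖w - u‖)
          * (M ^ (n + 1) * ‖g w‖) := by
      calc ‖(Pw - Pu) (g (wp i w (n + 1)))‖
          ≤ ‖Pw - Pu‖ * ‖g (wp i w (n + 1))‖ := ContinuousLinearMap.le_opNorm _ _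
        _ ≤ _ := by
            apply mul_le_mul hPdiff hgN (norm_nonneg _)
            have hS : (0:ℝ) ≤ ∑ j ∈ Finset.range (n + 1), M ^ j :=
              Finset.sum_nonneg fun j _ => pow_nonneg hM0 j
            positivity
    have t2 : ‖Pu (g (wp i w (n + 1)) - g (wp i u (n + 1)))‖
        ≤ M ^ (n + 1) * (L * (M ^ (n + 1) * ‖w - u‖)) := by
      calc ‖Pu (g (wp i w (n + 1)) - g (wp i u (n + 1)))‖
          ≤ ‖Pu‖ * ‖g (wp i w (n + 1)) - g (wp i u (n + 1))‖ :=
            ContinuousLinearMap.le_opNorm _ _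
        _ ≤ _ := by
            apply mul_le_mul hPun hgdiff (norm_nonneg _) (pow_nonneg hM0 _)
    calc ‖gradL i w - gradL i u‖
        ≤ ‖(Pw - Pu) (g (wp i w (n + 1)))‖
          + ‖Pu (g (wp i w (n + 1)) - g (wp i u (n + 1)))‖ := by
          rw [hsplit]; exact norm_add_le _ _
      _ ≤ (M ^ n * (α * ρ) * (∑ j ∈ Finset.range (n + 1), M ^ j) * ‖w - u‖)
            * (M ^ (n + 1) * ‖g w‖)
          + M ^ (n + 1) * (L * (M ^ (n + 1) * ‖w - u‖)) := add_le_add t1 t2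
      _ = (M ^ (2 * (n + 1)) * L + C * ‖g w‖) * ‖w - u‖ := by
          rw [hCeq, two_mul, pow_add]; ring
  -- integrate
  have hIntdiff : Integrable (fun i => gradL i w - gradL i u) P := (hInt w).sub (hInt u)
  have hIntbound : Integrable
      (fun i => (M ^ (2 * (n + 1)) * L + C * ‖gradient (l i) w‖) * ‖w - u‖) P := by
    apply Integrable.mul_const
    exact (integrable_const _).add ((hIntn w).const_mul C)
  calc ‖(∫ i, gradL i w ∂P) - ∫ i, gradL i u ∂P‖
      = ‖∫ i, (gradL i w - gradL i u) ∂P‖ := by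
        rw [integral_sub (hInt w) (hInt u)]
    _ ≤ ∫ i, ‖gradL i w - gradL i u‖ ∂P := norm_integral_le_integral_norm _
    _ ≤ ∫ i, (M ^ (2 * (n + 1)) * L + C * ‖gradient (l i) w‖) * ‖w - u‖ ∂P :=
        integral_mono hIntdiff.norm hIntbound hpoint
    _ = (M ^ (2 * (n + 1)) * L + C * ∫ i, ‖gradient (l i) w‖ ∂P) * ‖w - u‖ := by
        rw [integral_mul_const]
        congr 1
        rw [integral_add (integrable_const _) ((hIntn w).const_mul C),
          integral_const, integral_const_mul]
        simp
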